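/- Define f(x) := Σ_{a,b∈ℤ} x^{a²+ab+b²} for real -1 < x < 1. Then f has at least one zero in the open interval (-1, 0). -/

import Mathlib

open Finset

/-- The (nonnegative) value of the quadratic form `a² + ab + b²` as a natural number. -/
def qN (p : ℤ × ℤ) : ℕ := (p.1 ^ 2 + p.1 * p.2 + p.2 ^ 2).toNat

lemma qZ_nonneg (p : ℤ × ℤ) : 0 ≤ p.1 ^ 2 + p.1 * p.2 + p.2 ^ 2 := by
  nlinarith [sq_nonneg (p.1 + p.2), sq_nonneg p.1, sq_nonneg p.2]

lemma qN_cast (p : ℤ × ℤ) : (qN p : ℤ) = p.1 ^ 2 + p.1 * p.2 + p.2 ^ 2 :=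
  Int.toNat_of_nonneg (qZ_nonneg p)

lemma int_abs_le_sq (a : ℤ) : |a| ≤ a ^ 2 := by
  rcases eq_or_ne a 0 with h | h
  · simp [h]
  · have h1 : 1 ≤ |a| := Int.one_le_abs h
    nlinarith [sq_abs a, abs_nonneg a]

lemma natAbs_add_le (p : ℤ × ℤ) : p.1.natAbs + p.2.natAbs ≤ 2 * qN p := by
  have h1 := int_abs_le_sq p.1
  have h2 := int_abs_le_sq p.2
  have h3 := qN_cast p
  have h4 : (p.1.natAbs : ℤ) = |p.1| := (Int.abs_eq_natAbs p.1).symm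
  have h5 : (p.2.natAbs : ℤ) = |p.2| := (Int.abs_eq_natAbs p.2).symm
  have : (p.1.natAbs : ℤ) + (p.2.natAbs : ℤ) ≤ 2 * (qN p : ℤ) := by
    rw [h4, h5, h3]
    nlinarith [sq_nonneg (p.1 + p.2), sq_nonneg p.1, sq_nonneg p.2]
  exact_mod_cast this

lemma sq_natAbs_le (p : ℤ × ℤ) : (p.1.natAbs + p.2.natAbs) ^ 2 ≤ 4 * qN p := by
  have h3 := qN_cast p
  have h4 : (p.1.natAbs : ℤ) = |p.1| := (Int.abs_eq_natAbs p.1).symm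
  have h5 : (p.2.natAbs : ℤ) = |p.2| := (Int.abs_eq_natAbs p.2).symm
  have : ((p.1.natAbs : ℤ) + (p.2.natAbs : ℤ)) ^ 2 ≤ 4 * (qN p : ℤ) := by
    rw [h4, h5, h3]
    nlinarith [sq_nonneg (|p.1| - |p.2|), sq_nonneg (p.1 + p.2), sq_abs p.1, sq_abs p.2,
      abs_mul p.1 p.2, le_abs_self (p.1 * p.2), neg_abs_le (p.1 * p.2)]
  exact_mod_cast this

lemma qN_pos {p : ℤ × ℤ} (h : p ≠ (0, 0)) : qN p ≠ 0 := by
  have hq := qN_cast p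
  have hne : p.1 ≠ 0 ∨ p.2 ≠ 0 := by
    by_contra hc
    push_neg at hc
    exact h (Prod.ext hc.1 hc.2)
  have hpos : 0 < p.1 ^ 2 + p.1 * p.2 + p.2 ^ 2 := by
    rcases hne with h1 | h2
    · have : 1 ≤ |p.1| := Int.one_le_abs h1
      nlinarith [sq_nonneg (p.1 + 2 * p.2), sq_nonneg p.2, sq_abs p.1]
    · have : 1 ≤ |p.2| := Int.one_le_abs h2
      nlinarith [sq_nonneg (2 * p.1 + p.2), sq_nonneg p.1, sq_abs p.2]
  omega

lemma qN_even (p : ℤ × ℤ) : Even (qN p) ↔ (Even p.1 ∧ Even p.2) := by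
  have h : Even (qN p) ↔ Even ((qN p : ℤ)) := by
    exact_mod_cast (Int.even_coe_nat (qN p)).symm
  rw [h, qN_cast]
  rcases Int.even_or_odd p.1 with h1 | h1 <;> rcases Int.even_or_odd p.2 with h2 | h2 <;>
    simp [parity_simps, h1, h2]

lemma qN_double (p : ℤ × ℤ) : qN (2 * p.1, 2 * p.2) = 4 * qN p := by
  have h1 := qN_cast p
  have h2 := qN_cast (2 * p.1, 2 * p.2)
  have : (qN (2 * p.1, 2 * p.2) : ℤ) = 4 * (qN p : ℤ) := by
    rw [h2, h1]; ring
  exact_mod_cast this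

lemma summable_geom_int {r : ℝ} (h0 : 0 ≤ r) (h1 : r < 1) :
    Summable (fun n : ℤ => r ^ n.natAbs) := by
  apply Summable.of_nat_of_neg <;>
    simpa using summable_geometric_of_lt_one h0 h1

lemma tsum_geom_int {r : ℝ} (h0 : 0 ≤ r) (h1 : r < 1) :
    ∑' n : ℤ, r ^ n.natAbs = (1 + r) / (1 - r) := by
  have hs : Summable (fun n : ℕ => r ^ n) := summable_geometric_of_lt_one h0 h1
  have h1' : (1 : ℝ) - r ≠ 0 := by linarith
  rw [Summable.tsum_of_nat_of_neg (by simpa using hs) (by simpa using hs)]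
  simp only [Int.natAbs_neg, Int.natAbs_natCast]
  rw [tsum_geometric_of_lt_one h0 h1]
  simp only [Int.natAbs_zero, pow_zero]
  field_simp
  ring

lemma summable_prod_geom {r : ℝ} (h0 : 0 ≤ r) (h1 : r < 1) :
    Summable (fun p : ℤ × ℤ => r ^ p.1.natAbs * r ^ p.2.natAbs) := by
  apply Summable.mul_of_nonneg (summable_geom_int h0 h1) (summable_geom_int h0 h1) <;>
    exact fun _ => pow_nonneg h0 _

lemma tsum_prod_geom {r : ℝ} (h0 : 0 ≤ r) (h1 : r < 1) :
    ∑' p : ℤ × ℤ, r ^ p.1.natAbs * r ^ p.2.natAbs = ((1 + r) / (1 - r)) ^ 2 := by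
  have hn : Summable (fun n : ℤ => ‖r ^ n.natAbs‖) :=
    (summable_geom_int h0 h1).congr
      (fun n => (Real.norm_of_nonneg (pow_nonneg h0 _)).symm)
  rw [← tsum_mul_tsum_of_summable_norm hn hn, tsum_geom_int h0 h1, sq]

lemma pow_q_le {x r : ℝ} (h0 : 0 ≤ r) (h1 : r ≤ 1) (hx : |x| ≤ r ^ 2) (p : ℤ × ℤ) :
    |x| ^ qN p ≤ r ^ p.1.natAbs * r ^ p.2.natAbs := by
  calc |x| ^ qN p ≤ (r ^ 2) ^ qN p := pow_le_pow_left₀ (abs_nonneg x) hx _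
    _ = r ^ (2 * qN p) := by rw [pow_mul]
    _ ≤ r ^ (p.1.natAbs + p.2.natAbs) := pow_le_pow_of_le_one h0 h1 (natAbs_add_le p)
    _ = r ^ p.1.natAbs * r ^ p.2.natAbs := pow_add r _ _

lemma sqrt_abs_lt_one {x : ℝ} (hx : |x| < 1) :
    0 ≤ Real.sqrt |x| ∧ Real.sqrt |x| < 1 ∧ |x| ≤ Real.sqrt |x| ^ 2 := by
  have h0 : 0 ≤ Real.sqrt |x| := Real.sqrt_nonneg _
  have hsq : Real.sqrt |x| ^ 2 = |x| := Real.sq_sqrt (abs_nonneg x)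
  refine ⟨h0, ?_, hsq.ge⟩
  nlinarith [abs_nonneg x]

lemma summable_q {x : ℝ} (hx : |x| < 1) : Summable (fun p : ℤ × ℤ => x ^ qN p) := by
  obtain ⟨h0, h1, h2⟩ := sqrt_abs_lt_one hx
  apply Summable.of_norm
  apply Summable.of_nonneg_of_le (fun p => norm_nonneg _)
    (fun p => ?_) (summable_prod_geom h0 h1)
  rw [Real.norm_eq_abs, abs_pow]
  exact pow_q_le h0 h1.le h2 p

/-- The theta-like series of the quadratic form, with natural-number exponents. -/
noncomputable def Fq (x : ℝ) : ℝ := ∑' p : ℤ × ℤ, x ^ qN p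

lemma Fq_zero : Fq 0 = 1 := by
  rw [Fq, tsum_eq_single ((0 : ℤ), (0 : ℤ))]
  · norm_num [qN]
  · intro p hp
    exact zero_pow (qN_pos hp)

lemma Fq_feq {t : ℝ} (h0 : 0 ≤ t) (h1 : t < 1) :
    Fq (-t) = 2 * Fq (t ^ 4) - Fq t := by
  have habs : |t| < 1 := by rwa [abs_of_nonneg h0]
  have habs' : |(-t)| < 1 := by rwa [abs_neg]
  have habs4 : |t ^ 4| < 1 := by
    rw [abs_of_nonneg (pow_nonneg h0 _)]
    exact pow_lt_one₀ h0 h1 (by norm_num)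
  have hs1 : Summable (fun p : ℤ × ℤ => (-t) ^ qN p) := summable_q habs'
  have hs2 : Summable (fun p : ℤ × ℤ => t ^ qN p) := summable_q habs
  have key : (∑' p : ℤ × ℤ, ((-t) ^ qN p + t ^ qN p)) = 2 * Fq (t ^ 4) := by
    have hinj : Function.Injective (fun p : ℤ × ℤ => ((2 * p.1, 2 * p.2) : ℤ × ℤ)) := by
      intro p q h
      simp only [Prod.mk.injEq] at h
      exact Prod.ext (by omega) (by omega)
    have hsupp : Function.support (fun p : ℤ × ℤ => (-t) ^ qN p + t ^ qN p) ⊆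
        Set.range (fun p : ℤ × ℤ => ((2 * p.1, 2 * p.2) : ℤ × ℤ)) := by
      intro p hp
      by_contra hr
      apply hp
      have hodd : ¬ Even (qN p) := by
        rw [qN_even]
        rintro ⟨⟨k, hk⟩, ⟨l, hl⟩⟩
        exact hr ⟨(k, l), by simp only [Prod.ext_iff]; exact ⟨by omega, by omega⟩⟩
      have hodd' : Odd (qN p) := Nat.not_even_iff_odd.mp hodd
      simp only [hodd'.neg_pow]
      ring
    rw [← Function.Injective.tsum_eq hinj hsupp]
    have hterm : ∀ p : ℤ × ℤ,
        (-t) ^ qN (2 * p.1, 2 * p.2) + t ^ qN (2 * p.1, 2 * p.2) = 2 * (t ^ 4) ^ qN p := by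
      intro p
      rw [qN_double]
      have heven : Even (4 * qN p) := ⟨2 * qN p, by ring⟩
      rw [heven.neg_pow, mul_comm 4 (qN p), pow_mul]
      ring
    calc (∑' p : ℤ × ℤ, ((-t) ^ qN (2 * p.1, 2 * p.2) + t ^ qN (2 * p.1, 2 * p.2)))
        = ∑' p : ℤ × ℤ, 2 * (t ^ 4) ^ qN p := tsum_congr hterm
      _ = 2 * Fq (t ^ 4) := tsum_mul_left
  have hadd : (∑' p : ℤ × ℤ, ((-t) ^ qN p + t ^ qN p)) = Fq (-t) + Fq t :=
    Summable.tsum_add hs1 hs2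
  rw [hadd] at key
  linarith

lemma Fq_cont : ContinuousOn Fq (Set.Icc (-(4/5) : ℝ) (4/5)) := by
  apply continuousOn_tsum
    (u := fun p : ℤ × ℤ => (9/10 : ℝ) ^ p.1.natAbs * (9/10) ^ p.2.natAbs)
  · exact fun p => (continuous_pow (qN p)).continuousOn
  · exact summable_prod_geom (by norm_num) (by norm_num)
  · intro p x hx
    rw [Real.norm_eq_abs, abs_pow]
    refine pow_q_le (by norm_num) (by norm_num) ?_ p
    have : |x| ≤ 4/5 := abs_le.2 ⟨hx.1, hx.2⟩
    nlinarith

def S4 : Finset (ℤ × ℤ) := (Finset.range 9 ×ˢ Finset.range 9).map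
  ⟨fun p => ((p.1 : ℤ) - 4, (p.2 : ℤ) - 4), by
    unfold Function.Injective
    intro p q h
    simp only [Prod.mk.injEq, sub_left_inj, Nat.cast_inj] at h
    exact Prod.ext h.1 h.2⟩

def S7 : Finset (ℤ × ℤ) := (Finset.range 15 ×ˢ Finset.range 15).map
  ⟨fun p => ((p.1 : ℤ) - 7, (p.2 : ℤ) - 7), by
    unfold Function.Injective
    intro p q h
    simp only [Prod.mk.injEq, sub_left_inj, Nat.cast_inj] at h
    exact Prod.ext h.1 h.2⟩

lemma mem_S7 {p : ℤ × ℤ} (h1 : p.1.natAbs ≤ 7) (h2 : p.2.natAbs ≤ 7) : p ∈ S7 := by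
  simp only [S7, Finset.mem_map, Finset.mem_product, Finset.mem_range,
    Function.Embedding.coeFn_mk]
  exact ⟨((p.1 + 7).toNat, (p.2 + 7).toNat), ⟨by omega, by omega⟩,
    Prod.ext (by simp; omega) (by simp; omega)⟩

set_option maxRecDepth 100000 in
lemma lower_S4 : (159/10 : ℝ) ≤ ∑ p ∈ S4, ((4 : ℝ)/5) ^ qN p := by
  rw [S4, Finset.sum_map, Finset.sum_product]
  simp only [Function.Embedding.coeFn_mk, Finset.sum_range_succ, Finset.sum_range_zero, qN]
  norm_num [show ((3:ℤ).toNat) = 3 from rfl, show ((4:ℤ).toNat) = 4 from rfl, show ((7:ℤ).toNat) = 7 from rfl, show ((9:ℤ).toNat) = 9 from rfl, show ((12:ℤ).toNat) = 12 from rfl, show ((13:ℤ).toNat) = 13 from rfl, show ((16:ℤ).toNat) = 16 from rfl, show ((19:ℤ).toNat) = 19 from rfl, show ((21:ℤ).toNat) = 21 from rfl, show ((27:ℤ).toNat) = 27 from rfl, show ((28:ℤ).toNat) = 28 from rfl, show ((37:ℤ).toNat) = 37 from rfl, show ((48:ℤ).toNat) = 48 from rfl]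

set_option maxRecDepth 100000 in
lemma upper_S7 : (∑ p ∈ S7, ((256 : ℝ)/625) ^ qN p) ≤ 41/10 := by
  rw [S7, Finset.sum_map, Finset.sum_product]
  simp only [Function.Embedding.coeFn_mk, Finset.sum_range_succ, Finset.sum_range_zero, qN]
  norm_num [show ((3:ℤ).toNat) = 3 from rfl, show ((4:ℤ).toNat) = 4 from rfl, show ((7:ℤ).toNat) = 7 from rfl, show ((9:ℤ).toNat) = 9 from rfl, show ((12:ℤ).toNat) = 12 from rfl, show ((13:ℤ).toNat) = 13 from rfl, show ((16:ℤ).toNat) = 16 from rfl, show ((19:ℤ).toNat) = 19 from rfl, show ((21:ℤ).toNat) = 21 from rfl, show ((25:ℤ).toNat) = 25 from rfl, show ((27:ℤ).toNat) = 27 from rfl, show ((28:ℤ).toNat) = 28 from rfl, show ((31:ℤ).toNat) = 31 from rfl, show ((36:ℤ).toNat) = 36 from rfl, show ((37:ℤ).toNat) = 37 from rfl, show ((39:ℤ).toNat) = 39 from rfl, show ((43:ℤ).toNat) = 43 from rfl, show ((48:ℤ).toNat) = 48 from rfl, show ((49:ℤ).toNat) = 49 from rfl, show ((52:ℤ).toNat)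 = 52 from rfl, show ((57:ℤ).toNat) = 57 from rfl, show ((61:ℤ).toNat) = 61 from rfl, show ((63:ℤ).toNat) = 63 from rfl, show ((67:ℤ).toNat) = 67 from rfl, show ((75:ℤ).toNat) = 75 from rfl, show ((76:ℤ).toNat) = 76 from rfl, show ((79:ℤ).toNat) = 79 from rfl, show ((91:ℤ).toNat) = 91 from rfl, show ((93:ℤ).toNat) = 93 from rfl, show ((108:ℤ).toNat) = 108 from rfl, show ((109:ℤ).toNat) = 109 from rfl, show ((127:ℤ).toNat) = 127 from rfl, show ((147:ℤ).toNat) = 147 from rfl]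

lemma Fq_lower : (159/10 : ℝ) ≤ Fq (4/5) := by
  have hsum : Summable (fun p : ℤ × ℤ => ((4:ℝ)/5) ^ qN p) :=
    summable_q (by rw [abs_of_nonneg]; norm_num; norm_num)
  exact le_trans lower_S4 (Summable.sum_le_tsum S4 (fun p _ => pow_nonneg (by norm_num) _) hsum)

lemma Fq_upper : Fq ((256 : ℝ)/625) ≤ 41/10 + 2 := by
  have habs : |(256 : ℝ)/625| < 1 := by rw [abs_of_nonneg] <;> norm_num
  have hsum : Summable (fun p : ℤ × ℤ => ((256:ℝ)/625) ^ qN p) := summable_q habs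
  set r : ℝ := (256/625 : ℝ) ^ 2 with hr
  have hr0 : (0:ℝ) ≤ r := by positivity
  have hr1 : r < 1 := by rw [hr]; norm_num
  have hsplit := Summable.sum_add_tsum_compl (s := S7) hsum
  have htail : (∑' p : ((S7 : Set (ℤ × ℤ))ᶜ : Set (ℤ × ℤ)),
      ((256:ℝ)/625) ^ qN (p : ℤ × ℤ)) ≤ 2 := by
    have hbound : ∀ p : ((S7 : Set (ℤ × ℤ))ᶜ : Set (ℤ × ℤ)),
        ((256:ℝ)/625) ^ qN (p : ℤ × ℤ) ≤
          r ^ (p : ℤ × ℤ).1.natAbs * r ^ (p : ℤ × ℤ).2.natAbs := by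
      rintro ⟨p, hp⟩
      simp only [Set.mem_compl_iff, Finset.mem_coe] at hp
      have hm : 8 ≤ p.1.natAbs + p.2.natAbs := by
        by_contra hc
        push_neg at hc
        exact hp (mem_S7 (by omega) (by omega))
      set m := p.1.natAbs + p.2.natAbs with hmdef
      have hq : 2 * m ≤ qN p := by
        have h1 : m ^ 2 ≤ 4 * qN p := sq_natAbs_le p
        have h2 : 8 * m ≤ m * m := Nat.mul_le_mul_right m hm
        nlinarith [sq (m)]
      calc ((256:ℝ)/625) ^ qN p ≤ ((256:ℝ)/625) ^ (2 * m) :=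
            pow_le_pow_of_le_one (by norm_num) (by norm_num) hq
        _ = r ^ m := by rw [hr, ← pow_mul, mul_comm]
        _ = r ^ p.1.natAbs * r ^ p.2.natAbs := by rw [hmdef, pow_add]
    have hsub1 : Summable (fun p : ((S7 : Set (ℤ × ℤ))ᶜ : Set (ℤ × ℤ)) =>
        ((256:ℝ)/625) ^ qN (p : ℤ × ℤ)) := hsum.subtype _
    have hsub2 : Summable (fun p : ((S7 : Set (ℤ × ℤ))ᶜ : Set (ℤ × ℤ)) =>
        r ^ (p : ℤ × ℤ).1.natAbs * r ^ (p : ℤ × ℤ).2.natAbs) :=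
      (summable_prod_geom hr0 hr1).subtype _
    calc (∑' p : ((S7 : Set (ℤ × ℤ))ᶜ : Set (ℤ × ℤ)), ((256:ℝ)/625) ^ qN (p : ℤ × ℤ))
        ≤ ∑' p : ((S7 : Set (ℤ × ℤ))ᶜ : Set (ℤ × ℤ)),
            r ^ (p : ℤ × ℤ).1.natAbs * r ^ (p : ℤ × ℤ).2.natAbs :=
          Summable.tsum_le_tsum hbound hsub1 hsub2
      _ ≤ ∑' p : ℤ × ℤ, r ^ p.1.natAbs * r ^ p.2.natAbs :=
          Summable.tsum_subtype_le _ _ (fun p => mul_nonneg (pow_nonneg hr0 _) (pow_nonneg hr0 _))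
            (summable_prod_geom hr0 hr1)
      _ = ((1 + r) / (1 - r)) ^ 2 := tsum_prod_geom hr0 hr1
      _ ≤ 2 := by rw [hr]; norm_num
  have : Fq ((256:ℝ)/625) = (∑ p ∈ S7, ((256:ℝ)/625) ^ qN p) +
      ∑' p : ((S7 : Set (ℤ × ℤ))ᶜ : Set (ℤ × ℤ)), ((256:ℝ)/625) ^ qN (p : ℤ × ℤ) :=
    hsplit.symm
  rw [this]
  exact add_le_add upper_S7 htail

lemma Fq_neg_val : Fq (-(4/5 : ℝ)) < 0 := by
  have h := Fq_feq (t := 4/5) (by norm_num) (by norm_num)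
  have h4 : ((4:ℝ)/5) ^ 4 = 256/625 := by norm_num
  rw [h4] at h
  have := Fq_upper
  have := Fq_lower
  rw [h]
  linarith

/-- The function `f(x) := ∑_{a,b ∈ ℤ} x^{a²+ab+b²}` has at least one zero in `(-1, 0)`. -/
theorem quadratic_form_series_has_zero :
    ∃ x : ℝ, -1 < x ∧ x < 0 ∧
      (∑' p : ℤ × ℤ, x ^ (p.1 ^ 2 + p.1 * p.2 + p.2 ^ 2)) = 0 := by
  have hc : ContinuousOn Fq (Set.Icc (-(4/5) : ℝ) 0) :=
    Fq_cont.mono (Set.Icc_subset_Icc le_rfl (by norm_num))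
  have hiv := intermediate_value_Icc (a := -(4/5 : ℝ)) (b := 0) (by norm_num) hc
  have h0mem : (0 : ℝ) ∈ Set.Icc (Fq (-(4/5 : ℝ))) (Fq 0) := by
    constructor
    · exact Fq_neg_val.le
    · rw [Fq_zero]; norm_num
  obtain ⟨x, hx, hFx⟩ := hiv h0mem
  refine ⟨x, by linarith [hx.1], ?_, ?_⟩
  · rcases lt_or_eq_of_le hx.2 with h | h
    · exact h
    · exfalso
      rw [h, Fq_zero] at hFx
      norm_num at hFx
  · rw [show (∑' p : ℤ × ℤ, x ^ (p.1 ^ 2 + p.1 * p.2 + p.2 ^ 2)) = Fq x from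
      tsum_congr fun p => by rw [← qN_cast, zpow_natCast], hFx]
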